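/- arXiv:2207.12179 — 2 statements merged into one kernel-verified Lean document; each statement's English description precedes it below -/
import Mathlib

section
/- Suppose all students follow straightforward strategies in the time-constrained dynamic mechanism. Then for every college, the cutoff sequence over the rounds of the mechanism is weakly increasing (cutoffs never decrease). -/
open Finset
open scoped Classical

/-- A common-priority college admissions market: `n` students (index `0` is the
highest priority / highest score), `m` colleges with capacities `q`, and for each
student an injective ranking of the options in `Option (Fin m)` (`none` = being
unassigned / matched to oneself); a lower rank means more preferred. -/
structure Market (n m : ℕ) where
  q : Fin m → ℕ
  rank : Fin n → Option (Fin m) → ℕ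
  rank_inj : ∀ i, Function.Injective (rank i)

namespace Market

variable {n m : ℕ}

/-- `i` strictly prefers option `a` to option `b`. -/
def Prefers (M : Market n m) (i : Fin n) (a b : Option (Fin m)) : Prop :=
  M.rank i a < M.rank i b

/-- A matching: each student gets a college or `none`, capacities respected. -/
def IsMatching (M : Market n m) (μ : Fin n → Option (Fin m)) : Prop :=
  ∀ c : Fin m, (univ.filter fun i => μ i = some c).card ≤ M.q c

/-- Individual rationality. -/
def IR (M : Market n m) (μ : Fin n → Option (Fin m)) : Prop :=
  ∀ i c, μ i = some c → M.Prefers i (some c) none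

/-- `(i, c)` blocks `μ`: `i` prefers `c` to her assignment and `c` has a free
seat or holds a student of strictly lower priority. -/
def Blocks (M : Market n m) (μ : Fin n → Option (Fin m)) (i : Fin n) (c : Fin m) : Prop :=
  M.Prefers i (some c) (μ i) ∧
    ((univ.filter fun j => μ j = some c).card < M.q c ∨ ∃ j, μ j = some c ∧ i < j)

/-- Stability: a matching, individually rational, with no blocking pair. -/
def Stable (M : Market n m) (μ : Fin n → Option (Fin m)) : Prop :=
  M.IsMatching μ ∧ M.IR μ ∧ ∀ i c, ¬ M.Blocks μ i c

/-- Given an application profile, student `i` is tentatively held: she applies to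
some college `c` and fewer than `q c` higher-priority students apply to `c`. -/
def Held (M : Market n m) (app : Fin n → Option (Fin m)) (i : Fin n) : Prop :=
  ∃ c, app i = some c ∧ (univ.filter fun j => app j = some c ∧ j < i).card < M.q c

/-- The tentative matching induced by an application profile. -/
noncomputable def tentative (M : Market n m) (app : Fin n → Option (Fin m)) (i : Fin n) :
    Option (Fin m) :=
  if M.Held app i then app i else none

/-- `i` meets the current cutoff of `c`: `c` has a free seat in the tentative
matching, or tentatively holds a student of lower priority than `i`. -/
def Feasible (M : Market n m) (app : Fin n → Option (Fin m)) (i : Fin n) (c : Fin m) : Prop :=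
  (univ.filter fun j => M.tentative app j = some c).card < M.q c ∨
    ∃ j, M.tentative app j = some c ∧ i < j

/-- The option `o` is available to `i`: `none` always is, a college iff `i`
meets its cutoff. -/
def FeasibleOpt (M : Market n m) (app : Fin n → Option (Fin m)) (i : Fin n)
    (o : Option (Fin m)) : Prop :=
  o = none ∨ ∃ c, o = some c ∧ M.Feasible app i c

/-- One round of simultaneous straightforward revision: students who are not
rejected keep their application; every rejected student applies to her most
preferred option among those whose cutoff she meets. -/
def Step (M : Market n m) (app app' : Fin n → Option (Fin m)) : Prop :=
  ∀ i,
    (M.tentative app i = app i → app' i = app i) ∧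
    (M.tentative app i ≠ app i →
      M.FeasibleOpt app i (app' i) ∧
        ∀ o, M.FeasibleOpt app i o → M.rank i (app' i) ≤ M.rank i o)

/-- A run of the TCDM under straightforward strategies: `app t` is the profile of
applications in round `t + 1`; in round one every student applies to her most
preferred option, and each later round is a straightforward revision.  The
outcome of the TCDM with round limit `T ≥ 1` is `M.tentative (app (T - 1))`. -/
def IsRun (M : Market n m) (app : ℕ → Fin n → Option (Fin m)) : Prop :=
  (∀ i o, M.rank i (app 0 i) ≤ M.rank i o) ∧ ∀ t, M.Step (app t) (app (t + 1))

/-- Admission cutoff of college `c` (student `i` has score `n - i`): the lowest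
score among tentatively held students if `c` is at capacity, `0` otherwise. -/
noncomputable def cutoff (M : Market n m) (app : Fin n → Option (Fin m)) (c : Fin m) : ℕ :=
  if h : M.q c ≤ (univ.filter fun j => M.tentative app j = some c).card ∧
      (univ.filter fun j => M.tentative app j = some c).Nonempty then
    n - ((univ.filter fun j => M.tentative app j = some c).max' h.2 : ℕ)
  else 0

/-- Serial dictatorship outcome: in priority order each student receives her most
preferred option among `none` and the colleges not yet filled by
higher-priority students. -/
def IsSerialDictatorship (M : Market n m) (μ : Fin n → Option (Fin m)) : Prop :=
  ∀ i,
    (μ i = none ∨ ∃ c, μ i = some c ∧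
        (univ.filter fun j => j < i ∧ μ j = some c).card < M.q c) ∧
    ∀ o, (o = none ∨ ∃ c, o = some c ∧
        (univ.filter fun j => j < i ∧ μ j = some c).card < M.q c) →
      M.rank i (μ i) ≤ M.rank i o

end Market

/-- The market induced by capacities `q` and a profile `P` of strict preferences
over colleges (every college acceptable, `none` ranked last), where the
preference order of student `i` ranks college `c` in position `P i c`. -/
noncomputable def mkMarket {n m : ℕ} (q : Fin m → ℕ) (P : Fin n → Equiv.Perm (Fin m)) :
    Market n m where
  q := q
  rank := fun i o => o.elim m fun c => (P i c : ℕ)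
  rank_inj := by
    intro i a b h
    match a, b with
    | none, none => rfl
    | none, some c =>
      simp only [Option.elim] at h
      exact absurd h.symm (Nat.ne_of_lt (P i c).isLt)
    | some c, none =>
      simp only [Option.elim] at h
      exact absurd h (Nat.ne_of_lt (P i c).isLt)
    | some c, some d =>
      simp only [Option.elim] at h
      exact congrArg some ((P i).injective (Fin.val_injective h))


section Aux

open Finset

variable {α : Type*} [LinearOrder α]

private lemma topSeg_mono (A : Finset α) {j j' : α} (hj : j ∈ A) (h : j < j') :
    (A.filter (· < j)).card < (A.filter (· < j')).card := by
  classical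
  apply Finset.card_lt_card
  constructor
  · intro x hx
    simp only [Finset.mem_filter] at hx ⊢
    exact ⟨hx.1, hx.2.trans h⟩
  · intro hsub
    have hmem : j ∈ A.filter (· < j) := hsub (by simp [hj, h])
    simp at hmem

private lemma topSeg_card_le (A : Finset α) (q : ℕ) :
    (A.filter fun j => (A.filter (· < j)).card < q).card ≤ q := by
  classical
  have := Finset.card_le_card_of_injOn (f := fun j => (A.filter (· < j)).card)
    (s := A.filter fun j => (A.filter (· < j)).card < q) (t := Finset.range q)
    (by intro j hj; simp only [Finset.coe_filter, Set.mem_setOf] at hj; simpa using hj.2)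
    (by
      intro j hj j' hj' hEq
      simp only [Finset.coe_filter, Set.mem_setOf] at hj hj'
      by_contra hne
      rcases lt_or_gt_of_ne hne with h | h
      · exact absurd hEq (Nat.ne_of_lt (topSeg_mono A hj.1 h))
      · exact absurd hEq.symm (Nat.ne_of_lt (topSeg_mono A hj'.1 h)))
  simpa using this

private lemma le_topSeg_card {n : ℕ} (A : Finset (Fin n)) (q : ℕ) (hq : q ≤ A.card) :
    q ≤ (A.filter fun j => (A.filter (· < j)).card < q).card := by
  classical
  set e := A.orderIsoOfFin rfl with he
  have key : ∀ k : Fin A.card, (A.filter (· < (e k : Fin n))).card ≤ (k : ℕ) := by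
    intro k
    have hsub : A.filter (· < (e k : Fin n)) ⊆
        (Finset.univ.filter fun k' : Fin A.card => k' < k).image (fun k' => (e k' : Fin n)) := by
      intro b hb
      simp only [Finset.mem_filter] at hb
      refine Finset.mem_image.2 ⟨e.symm ⟨b, hb.1⟩, ?_, by simp⟩
      simp only [Finset.mem_filter, Finset.mem_univ, true_and]
      rw [← OrderIso.lt_iff_lt e]
      simp only [OrderIso.apply_symm_apply]
      exact hb.2
    calc (A.filter (· < (e k : Fin n))).card
        ≤ ((Finset.univ.filter fun k' : Fin A.card => k' < k).image
            (fun k' => (e k' : Fin n))).card := Finset.card_le_card hsub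
      _ ≤ (Finset.univ.filter fun k' : Fin A.card => k' < k).card := Finset.card_image_le
      _ = (k : ℕ) := by
          have : (Finset.univ.filter fun k' : Fin A.card => k' < k) = Finset.Iio k := by
            ext x; simp
          rw [this, Fin.card_Iio]
  have hinj : Function.Injective (fun k : Fin q => (e (Fin.castLE hq k) : Fin n)) := by
    intro a b hab
    have := e.injective (Subtype.ext hab)
    exact Fin.castLE_injective hq this
  have hsub : (Finset.univ : Finset (Fin q)).image (fun k => (e (Fin.castLE hq k) : Fin n)) ⊆
      A.filter fun j => (A.filter (· < j)).card < q := by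
    intro a ha
    obtain ⟨k, -, rfl⟩ := Finset.mem_image.1 ha
    refine Finset.mem_filter.2 ⟨(e (Fin.castLE hq k)).2, ?_⟩
    calc (A.filter (· < (e (Fin.castLE hq k) : Fin n))).card
        ≤ ((Fin.castLE hq k : Fin A.card) : ℕ) := key _
      _ = (k : ℕ) := rfl
      _ < q := k.isLt
  calc q = ((Finset.univ : Finset (Fin q)).image
        (fun k => (e (Fin.castLE hq k) : Fin n))).card := by
          rw [Finset.card_image_of_injective _ hinj, Finset.card_univ, Fintype.card_fin]
    _ ≤ _ := Finset.card_le_card hsub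

private lemma tentative_eq_some_iff {n m : ℕ} (M : Market n m) (ap : Fin n → Option (Fin m))
    (j : Fin n) (c : Fin m) :
    M.tentative ap j = some c ↔ ap j = some c ∧
      ((Finset.univ.filter fun k => ap k = some c).filter (· < j)).card < M.q c := by
  classical
  have hf : ∀ c' : Fin m, (Finset.univ.filter fun k => ap k = some c' ∧ k < j) =
      ((Finset.univ.filter fun k => ap k = some c').filter (· < j)) := by
    intro c'; rw [Finset.filter_filter]
  unfold Market.tentative
  split_ifs with h
  · constructor
    · intro hj
      obtain ⟨c', hc', hcard⟩ := h
      rw [hj] at hc'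
      cases hc'
      rw [hf] at hcard
      exact ⟨hj, hcard⟩
    · exact fun h' => h'.1
  · constructor
    · intro h'; simp at h'
    · intro h'
      exact absurd ⟨c, h'.1, by rw [hf]; exact h'.2⟩ h

private lemma heldSet_eq {n m : ℕ} (M : Market n m) (ap : Fin n → Option (Fin m)) (c : Fin m) :
    (Finset.univ.filter fun j => M.tentative ap j = some c) =
      ((Finset.univ.filter fun k => ap k = some c).filter
        fun j => (((Finset.univ.filter fun k => ap k = some c)).filter (· < j)).card < M.q c) := by
  ext j
  simp only [Finset.mem_filter, Finset.mem_univ, true_and, and_assoc]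
  rw [tentative_eq_some_iff]

end Aux

/-- under straightforward strategies, every college's cutoff
sequence over the rounds of the TCDM is weakly increasing. -/
theorem tcdm_cutoffs_monotone (n m : ℕ) (M : Market n m)
    (app : ℕ → Fin n → Option (Fin m)) (hrun : M.IsRun app) :
    ∀ (c : Fin m) (t : ℕ), M.cutoff (app t) c ≤ M.cutoff (app (t + 1)) c := by
  classical
  intro c t
  by_cases hT : M.q c ≤ (Finset.univ.filter fun j => M.tentative (app t) j = some c).card ∧
      (Finset.univ.filter fun j => M.tentative (app t) j = some c).Nonempty
  swap
  · rw [Market.cutoff, dif_neg hT]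
    exact Nat.zero_le _
  set A := Finset.univ.filter fun k => app t k = some c with hA
  set A' := Finset.univ.filter fun k => app (t + 1) k = some c with hA'
  set H := Finset.univ.filter fun j => M.tentative (app t) j = some c with hH
  set H' := Finset.univ.filter fun j => M.tentative (app (t + 1)) j = some c with hH'
  have hHeq : H = A.filter fun j => (A.filter (· < j)).card < M.q c := heldSet_eq M (app t) c
  have hH'eq : H' = A'.filter fun j => (A'.filter (· < j)).card < M.q c :=
    heldSet_eq M (app (t + 1)) c
  have hHcard : H.card = M.q c := le_antisymm (by rw [hHeq]; exact topSeg_card_le A (M.q c)) hT.1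
  -- Held students keep applying to c
  have hpersist : ∀ j ∈ H, app (t + 1) j = some c := by
    intro j hj
    rw [hH, Finset.mem_filter] at hj
    have hten := hj.2
    have h1 : M.tentative (app t) j = app t j := by
      unfold Market.tentative at hten ⊢
      split_ifs at hten ⊢ with hh
      · rfl
    rw [(hrun.2 t j).1 h1, ← h1, hten]
  have hHA' : H ⊆ A' := by
    intro j hj
    rw [hA', Finset.mem_filter]
    exact ⟨Finset.mem_univ j, hpersist j hj⟩
  have hA'card : M.q c ≤ A'.card := hHcard ▸ Finset.card_le_card hHA'
  have hH'card : M.q c ≤ H'.card := by rw [hH'eq]; exact le_topSeg_card A' (M.q c) hA'card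
  have hq1 : 1 ≤ M.q c := by
    have := hT.2.card_pos
    omega
  have hT' : M.q c ≤ H'.card ∧ H'.Nonempty :=
    ⟨hH'card, Finset.card_pos.1 (lt_of_lt_of_le hq1 hH'card)⟩
  rw [Market.cutoff, Market.cutoff, dif_pos hT, dif_pos hT']
  apply Nat.sub_le_sub_left
  have hmax : ∀ j ∈ H', j ≤ H.max' hT.2 := by
    intro j hj
    by_contra hlt
    push_neg at hlt
    rw [hH'eq, Finset.mem_filter] at hj
    have hsub : H ⊆ A'.filter (· < j) := by
      intro k hk
      refine Finset.mem_filter.2 ⟨hHA' hk, ?_⟩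
      exact lt_of_le_of_lt (Finset.le_max' H k hk) hlt
    have := Finset.card_le_card hsub
    omega
  exact_mod_cast hmax (H'.max' hT'.2) (Finset.max'_mem H' hT'.2)
end

section
/- Order colleges so that κ1 ≤ κ2 ≤ ... are their capacities in increasing order and let Σ(k) = κ1 + ... + κk. In the common-priority model, any student whose priority rank is at most Σ(T) is never rejected more than T − 1 times during the straightforward-strategy application process, and hence her TCDM outcome with round limit T equals her DA outcome. -/
open Finset
open scoped Classical

section Counting
variable {n : ℕ}

private lemma f_strictMonoOn (A : Finset (Fin n)) {j j' : Fin n} (hj : j ∈ A) (h : j < j') :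
    (A.filter (· < j)).card < (A.filter (· < j')).card := by
  apply Finset.card_lt_card
  constructor
  · intro x hx
    simp only [mem_filter] at hx ⊢
    exact ⟨hx.1, lt_trans hx.2 h⟩
  · intro hsub
    have : j ∈ A.filter (· < j) := hsub (by simp [mem_filter, hj, h])
    simp [mem_filter] at this

private lemma f_injOn (A : Finset (Fin n)) :
    Set.InjOn (fun j => (A.filter (· < j)).card) A := by
  intro x hx y hy hxy
  by_contra hne
  rcases lt_or_gt_of_ne (fun h => hne h) with h | h
  · exact absurd hxy (Nat.ne_of_lt (f_strictMonoOn A hx h))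
  · exact absurd hxy.symm (Nat.ne_of_lt (f_strictMonoOn A hy h))

/-- capacity: at most q students have fewer than q higher-priority mates. -/
lemma held_card_le (A : Finset (Fin n)) (q : ℕ) :
    (A.filter fun j => (A.filter (· < j)).card < q).card ≤ q := by
  classical
  set f : Fin n → ℕ := fun j => (A.filter (· < j)).card with hf
  have hinj : Set.InjOn f (A.filter fun j => f j < q) := by
    exact (f_injOn A).mono (by intro x hx; exact mem_coe.2 (mem_filter.1 (mem_coe.1 hx)).1)
  have h1 : ((A.filter fun j => f j < q).image f).card = (A.filter fun j => f j < q).card :=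
    Finset.card_image_of_injOn hinj
  have h2 : (A.filter fun j => f j < q).image f ⊆ Finset.range q := by
    intro y hy
    rcases Finset.mem_image.1 hy with ⟨j, hj, rfl⟩
    exact Finset.mem_range.2 (mem_filter.1 hj).2
  calc (A.filter fun j => f j < q).card = _ := h1.symm
    _ ≤ (Finset.range q).card := Finset.card_le_card h2
    _ = q := Finset.card_range q

/-- key counting: if at least `a ≤ q` applicants below `b`, then at least `a`
held students below `b`. -/
lemma held_card_ge (A : Finset (Fin n)) (q a : ℕ) (b : Fin n) (ha : a ≤ q)
    (h : a ≤ (A.filter (· < b)).card) :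
    a ≤ ((A.filter fun j => (A.filter (· < j)).card < q).filter (· < b)).card := by
  classical
  set f : Fin n → ℕ := fun j => (A.filter (· < j)).card with hf
  set B : Finset (Fin n) := A.filter (· < b) with hB
  have hBA : B ⊆ A := Finset.filter_subset _ _
  have hinjB : Set.InjOn f B := (f_injOn A).mono (by intro x hx; exact mem_coe.2 (hBA (mem_coe.1 hx)))
  have hlt : ∀ j ∈ B, f j < B.card := by
    intro j hj
    have hsub : A.filter (· < j) ⊆ B.erase j := by
      intro x hx
      rcases mem_filter.1 hx with ⟨hxA, hxj⟩
      refine Finset.mem_erase.2 ⟨ne_of_lt hxj, ?_⟩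
      exact mem_filter.2 ⟨hxA, lt_trans hxj (mem_filter.1 hj).2⟩
    have hjB : j ∈ B := hj
    calc f j ≤ (B.erase j).card := Finset.card_le_card hsub
      _ < B.card := Finset.card_erase_lt_of_mem hjB
  have himg : B.image f = Finset.range B.card := by
    apply Finset.eq_of_subset_of_card_le
    · intro y hy
      rcases Finset.mem_image.1 hy with ⟨j, hj, rfl⟩
      exact Finset.mem_range.2 (hlt j hj)
    · rw [Finset.card_range, Finset.card_image_of_injOn hinjB]
  -- the filter we care about
  have hswap : (A.filter fun j => f j < q).filter (· < b) = B.filter fun j => f j < q := by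
    rw [Finset.filter_filter, Finset.filter_filter]
    apply Finset.filter_congr
    intro x _
    simp [and_comm]
  rw [hswap]
  have himg2 : (B.filter fun j => f j < q).image f = (B.image f).filter (· < q) := by
    ext y
    simp only [Finset.mem_image, Finset.mem_filter]
    constructor
    · rintro ⟨j, ⟨hjB, hjq⟩, rfl⟩
      exact ⟨⟨j, hjB, rfl⟩, hjq⟩
    · rintro ⟨⟨j, hjB, rfl⟩, hq⟩
      exact ⟨j, ⟨hjB, hq⟩, rfl⟩
  have hinj2 : Set.InjOn f (B.filter fun j => f j < q) :=
    hinjB.mono (by intro x hx; exact mem_coe.2 (Finset.filter_subset _ _ (mem_coe.1 hx)))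
  have hcard : (B.filter fun j => f j < q).card = ((B.image f).filter (· < q)).card := by
    rw [← himg2, Finset.card_image_of_injOn hinj2]
  rw [hcard, himg]
  have : (Finset.range B.card).filter (· < q) = Finset.range (min B.card q) := by
    ext x
    simp [Finset.mem_range, Nat.lt_min]
  rw [this, Finset.card_range]
  exact le_min h ha
end Counting

namespace Market
variable {n m : ℕ}

lemma tent_iff (M : Market n m) (app1 : Fin n → Option (Fin m)) (j : Fin n) (c : Fin m) :
    M.tentative app1 j = some c ↔
      app1 j = some c ∧ (univ.filter fun j' => app1 j' = some c ∧ j' < j).card < M.q c := by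
  unfold tentative
  constructor
  · intro h
    by_cases hH : M.Held app1 j
    · rw [if_pos hH] at h
      rcases hH with ⟨c', hc', hcnt⟩
      have : c' = c := by rw [h] at hc'; exact (Option.some_inj.1 hc').symm
      subst this
      exact ⟨h, hcnt⟩
    · rw [if_neg hH] at h; exact absurd h (by simp)
  · rintro ⟨h1, h2⟩
    rw [if_pos ⟨c, h1, h2⟩]; exact h1

lemma tent_eq_or (M : Market n m) (app1 : Fin n → Option (Fin m)) (j : Fin n) :
    M.tentative app1 j = app1 j ∨ M.tentative app1 j = none := by
  unfold tentative; split <;> simp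

lemma tent_filter_eq (M : Market n m) (app1 : Fin n → Option (Fin m)) (c : Fin m) :
    (univ.filter fun j => M.tentative app1 j = some c)
      = ((univ.filter fun j => app1 j = some c).filter
          fun j => (((univ.filter fun j' => app1 j' = some c)).filter (· < j)).card < M.q c) := by
  ext j
  simp only [Finset.filter_filter, Finset.mem_filter, Finset.mem_univ, true_and]
  exact M.tent_iff app1 j c

lemma tent_card_le (M : Market n m) (app1 : Fin n → Option (Fin m)) (c : Fin m) :
    (univ.filter fun j => M.tentative app1 j = some c).card ≤ M.q c := by
  rw [M.tent_filter_eq app1 c]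
  exact held_card_le _ _

lemma tent_cnt_filter_eq (M : Market n m) (app1 : Fin n → Option (Fin m)) (b : Fin n) (c : Fin m) :
    (univ.filter fun j => M.tentative app1 j = some c ∧ j < b)
      = (((univ.filter fun j => app1 j = some c).filter
          fun j => (((univ.filter fun j' => app1 j' = some c)).filter (· < j)).card < M.q c).filter
            (· < b)) := by
  have h1 : (univ.filter fun j => M.tentative app1 j = some c ∧ j < b)
      = (univ.filter fun j => M.tentative app1 j = some c).filter (· < b) := by
    rw [Finset.filter_filter]
  rw [h1, M.tent_filter_eq app1 c]

/-- key counting: applicants below b give held students below b. -/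
lemma tent_cnt_ge (M : Market n m) (app1 : Fin n → Option (Fin m)) (b : Fin n) (c : Fin m)
    (a : ℕ) (ha : a ≤ M.q c)
    (h : a ≤ (univ.filter fun j => app1 j = some c ∧ j < b).card) :
    a ≤ (univ.filter fun j => M.tentative app1 j = some c ∧ j < b).card := by
  rw [M.tent_cnt_filter_eq app1 b c]
  apply held_card_ge _ _ _ _ ha
  rwa [Finset.filter_filter]

def Fullb (M : Market n m) (app1 : Fin n → Option (Fin m)) (b : Fin n) (c : Fin m) : Prop :=
  M.q c ≤ (univ.filter fun j => M.tentative app1 j = some c ∧ j < b).card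

lemma Fullb.mono {M : Market n m} {app1 : Fin n → Option (Fin m)} {b b' : Fin n} {c : Fin m}
    (hbb : b ≤ b') (h : M.Fullb app1 b c) : M.Fullb app1 b' c := by
  refine le_trans h (Finset.card_le_card ?_)
  intro x hx
  rcases Finset.mem_filter.1 hx with ⟨hu, h1, h2⟩
  exact Finset.mem_filter.2 ⟨hu, h1, lt_of_lt_of_le h2 hbb⟩

end Market

namespace Market
variable {n m : ℕ}

lemma keep {M : Market n m} {app1 app2 : Fin n → Option (Fin m)} (hstep : M.Step app1 app2)
    {j : Fin n} {c : Fin m} (h : M.tentative app1 j = some c) : app2 j = some c := by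
  have h1 : app1 j = some c := ((M.tent_iff app1 j c).1 h).1
  have h2 : M.tentative app1 j = app1 j := h.trans h1.symm
  exact ((hstep j).1 h2).trans h1

lemma cnt_step {M : Market n m} {app1 app2 : Fin n → Option (Fin m)} (hstep : M.Step app1 app2)
    (b : Fin n) (c : Fin m) (a : ℕ) (ha : a ≤ M.q c)
    (h : a ≤ (univ.filter fun j => M.tentative app1 j = some c ∧ j < b).card) :
    a ≤ (univ.filter fun j => M.tentative app2 j = some c ∧ j < b).card := by
  apply M.tent_cnt_ge app2 b c a ha
  refine le_trans h (Finset.card_le_card ?_)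
  intro x hx
  rcases Finset.mem_filter.1 hx with ⟨hu, h1, h2⟩
  exact Finset.mem_filter.2 ⟨hu, keep hstep h1, h2⟩

lemma Fullb.step {M : Market n m} {app1 app2 : Fin n → Option (Fin m)} {b : Fin n} {c : Fin m}
    (h : M.Fullb app1 b c) (hstep : M.Step app1 app2) : M.Fullb app2 b c :=
  cnt_step hstep b c (M.q c) le_rfl h

lemma Fullb.persist {M : Market n m} {app : ℕ → Fin n → Option (Fin m)} (hrun : M.IsRun app)
    {b : Fin n} {c : Fin m} {t t' : ℕ} (htt : t ≤ t') (h : M.Fullb (app t) b c) :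
    M.Fullb (app t') b c := by
  induction t', htt using Nat.le_induction with
  | base => exact h
  | succ t' htt IH => exact IH.step (hrun.2 t')

lemma Fullb.not_feasible {M : Market n m} {app1 : Fin n → Option (Fin m)} {b : Fin n} {c : Fin m}
    (h : M.Fullb app1 b c) : ¬ M.Feasible app1 b c := by
  have hle := M.tent_card_le app1 c
  have hsub : (univ.filter fun j => M.tentative app1 j = some c ∧ j < b)
      ⊆ (univ.filter fun j => M.tentative app1 j = some c) := by
    intro x hx
    rcases Finset.mem_filter.1 hx with ⟨hu, h1, _⟩
    exact Finset.mem_filter.2 ⟨hu, h1⟩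
  have heq : (univ.filter fun j => M.tentative app1 j = some c ∧ j < b)
      = (univ.filter fun j => M.tentative app1 j = some c) :=
    Finset.eq_of_subset_of_card_le hsub (le_trans hle h)
  rintro (hfree | ⟨j, hj, hbj⟩)
  · exact absurd hfree (not_lt.2 (le_trans h (Finset.card_le_card hsub)))
  · have hjmem : j ∈ (univ.filter fun j => M.tentative app1 j = some c ∧ j < b) := by
      rw [heq]; exact Finset.mem_filter.2 ⟨Finset.mem_univ j, hj⟩
    exact absurd hbj (not_lt.2 (le_of_lt (Finset.mem_filter.1 hjmem).2.2))

lemma reject_anatomy (M : Market n m) (app1 : Fin n → Option (Fin m)) (b : Fin n)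
    (h : M.tentative app1 b ≠ app1 b) :
    ∃ c, app1 b = some c ∧ M.tentative app1 b = none ∧
      M.q c ≤ (univ.filter fun j => app1 j = some c ∧ j < b).card ∧ M.Fullb app1 b c := by
  have hnone : M.tentative app1 b = none := (M.tent_eq_or app1 b).resolve_left h
  cases happ : app1 b with
  | none => exact absurd (hnone.trans happ.symm) h
  | some c =>
    have hnH : ¬ M.Held app1 b := by
      intro hH
      unfold Market.tentative at hnone
      rw [if_pos hH, happ] at hnone
      exact Option.some_ne_none _ hnone
    have hcnt : M.q c ≤ (univ.filter fun j => app1 j = some c ∧ j < b).card := by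
      by_contra hlt
      exact hnH ⟨c, happ, not_le.1 hlt⟩
    exact ⟨c, rfl, hnone, hcnt, M.tent_cnt_ge app1 b c _ le_rfl hcnt⟩

lemma reject_new {M : Market n m} {app1 app2 : Fin n → Option (Fin m)} (hstep : M.Step app1 app2)
    {b : Fin n} {c : Fin m} (happ : app2 b = some c)
    (hrej : M.tentative app2 b ≠ app2 b) : ¬ M.Fullb app1 b c := by
  intro hfull
  by_cases h1 : M.tentative app1 b = app1 b
  · have happ1 : app1 b = some c := ((hstep b).1 h1) ▸ happ
    have htent : M.tentative app1 b = some c := h1.trans happ1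
    have hheld := ((M.tent_iff app1 b c).1 htent).2
    have hsub : (univ.filter fun j => M.tentative app1 j = some c ∧ j < b)
        ⊆ (univ.filter fun j => app1 j = some c ∧ j < b) := by
      intro x hx
      rcases Finset.mem_filter.1 hx with ⟨hu, hx1, hx2⟩
      exact Finset.mem_filter.2 ⟨hu, ((M.tent_iff app1 x c).1 hx1).1, hx2⟩
    exact absurd (le_trans hfull (Finset.card_le_card hsub)) (not_le.2 hheld)
  · rcases ((hstep b).2 h1).1 with hnone | ⟨c', hc', hf⟩
    · rw [happ] at hnone; exact Option.some_ne_none _ hnone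
    · rw [happ] at hc'
      have : c' = c := (Option.some_inj.1 hc').symm
      subst this
      exact hfull.not_feasible hf

lemma chain {M : Market n m} {app1 app2 : Fin n → Option (Fin m)} (hstep : M.Step app1 app2)
    {b : Fin n} (hrej : M.tentative app2 b ≠ app2 b) :
    ∃ b', b' < b ∧ M.tentative app1 b' ≠ app1 b' := by
  obtain ⟨c, happ, -, hcnt, -⟩ := M.reject_anatomy app2 b hrej
  have hnew : ¬ M.Fullb app1 b c := reject_new hstep happ hrej
  by_contra hno
  push_neg at hno
  apply hnew
  unfold Market.Fullb
  refine le_trans hcnt (Finset.card_le_card ?_)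
  intro x hx
  rcases Finset.mem_filter.1 hx with ⟨hu, hx1, hx2⟩
  have hk : M.tentative app1 x = app1 x := hno x hx2
  have hx1' : app1 x = some c := ((hstep x).1 hk) ▸ hx1
  exact Finset.mem_filter.2 ⟨hu, hk.trans hx1', hx2⟩

lemma claimC {M : Market n m} {app : ℕ → Fin n → Option (Fin m)} (hrun : M.IsRun app) :
    ∀ (t : ℕ) (b : Fin n), M.tentative (app t) b ≠ app t b →
      ∃ S : Finset (Fin m), S.card = t + 1 ∧ ∀ c ∈ S, M.Fullb (app t) b c := by
  intro t
  induction t with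
  | zero =>
    intro b hrej
    obtain ⟨c, -, -, -, hfull⟩ := M.reject_anatomy (app 0) b hrej
    exact ⟨{c}, Finset.card_singleton c, by
      intro c' hc'; rw [Finset.mem_singleton] at hc'; subst hc'; exact hfull⟩
  | succ t IH =>
    intro b hrej
    obtain ⟨c, happ, -, -, hfull⟩ := M.reject_anatomy (app (t + 1)) b hrej
    have hstep := hrun.2 t
    have hnew : ¬ M.Fullb (app t) b c := reject_new hstep happ hrej
    obtain ⟨b', hb'b, hrej'⟩ := chain hstep hrej
    obtain ⟨S', hcard', hfull'⟩ := IH b' hrej'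
    have hcnotin : c ∉ S' := fun hc => hnew ((hfull' c hc).mono (le_of_lt hb'b))
    refine ⟨insert c S', ?_, ?_⟩
    · rw [Finset.card_insert_of_notMem hcnotin, hcard']
    · intro c' hc'
      rcases Finset.mem_insert.1 hc' with rfl | h
      · exact hfull
      · exact (((hfull' c' h).mono (le_of_lt hb'b)).step hstep)

lemma card_filter_lt {n : ℕ} (b : Fin n) :
    ((univ : Finset (Fin n)).filter fun j => j < b).card = (b : ℕ) := by
  have : ((univ : Finset (Fin n)).filter fun j => j < b) = Finset.Iio b := by
    ext x; simp [Finset.mem_Iio]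
  rw [this, Fin.card_Iio]

lemma sumbound {M : Market n m} (app1 : Fin n → Option (Fin m)) (b : Fin n)
    (S : Finset (Fin m)) (h : ∀ c ∈ S, M.Fullb app1 b c) :
    ∑ c ∈ S, M.q c ≤ (b : ℕ) := by
  classical
  have hdisj : ∀ c ∈ S, ∀ c' ∈ S, c ≠ c' →
      Disjoint (univ.filter fun j => M.tentative app1 j = some c ∧ j < b)
        (univ.filter fun j => M.tentative app1 j = some c' ∧ j < b) := by
    intro c _ c' _ hne
    rw [Finset.disjoint_left]
    intro x hx hx'
    have h1 := (Finset.mem_filter.1 hx).2.1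
    have h2 := (Finset.mem_filter.1 hx').2.1
    exact hne (Option.some_inj.1 (h1.symm.trans h2))
  calc ∑ c ∈ S, M.q c
      ≤ ∑ c ∈ S, (univ.filter fun j => M.tentative app1 j = some c ∧ j < b).card :=
        Finset.sum_le_sum h
    _ = (S.biUnion fun c => univ.filter fun j => M.tentative app1 j = some c ∧ j < b).card :=
        (Finset.card_biUnion hdisj).symm
    _ ≤ ((univ : Finset (Fin n)).filter fun j => j < b).card := by
        apply Finset.card_le_card
        intro x hx
        rcases Finset.mem_biUnion.1 hx with ⟨c, -, hxc⟩
        exact Finset.mem_filter.2 ⟨Finset.mem_univ x, (Finset.mem_filter.1 hxc).2.2⟩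
    _ = (b : ℕ) := card_filter_lt b

lemma invariant {M : Market n m} {app : ℕ → Fin n → Option (Fin m)} (hrun : M.IsRun app) :
    ∀ (t : ℕ) (b : Fin n) (o : Option (Fin m)),
      (∀ c, o = some c → ¬ M.Fullb (app t) b c) → M.rank b (app t b) ≤ M.rank b o := by
  intro t
  induction t with
  | zero => intro b o _; exact hrun.1 b o
  | succ t IH =>
    intro b o ho
    have hstep := hrun.2 t
    have ho' : ∀ c, o = some c → ¬ M.Fullb (app t) b c :=
      fun c hc hfull => ho c hc (hfull.step hstep)
    by_cases hrej : M.tentative (app t) b = app t b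
    · rw [(hstep b).1 hrej]; exact IH b o ho'
    · obtain ⟨hfeas, hopt⟩ := (hstep b).2 hrej
      apply hopt
      cases o with
      | none => exact Or.inl rfl
      | some c =>
        refine Or.inr ⟨c, rfl, ?_⟩
        by_contra hnf
        apply ho c rfl
        have hbnot : M.tentative (app t) b = none := (M.tent_eq_or (app t) b).resolve_left hrej
        have hfull : M.Fullb (app t) b c := by
          unfold Market.Feasible at hnf
          push_neg at hnf
          obtain ⟨h1, h2⟩ := hnf
          unfold Market.Fullb
          refine le_trans h1 (Finset.card_le_card ?_)
          intro x hx
          simp only [Finset.mem_filter, Finset.mem_univ, true_and] at hx ⊢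
          refine ⟨hx, ?_⟩
          have hxb : x ≤ b := h2 x hx
          rcases lt_or_eq_of_le hxb with hlt | heq
          · exact hlt
          · exfalso; rw [heq] at hx; rw [hx] at hbnot; exact Option.some_ne_none _ hbnot
        exact hfull.step hstep

end Market

namespace Market
variable {n m : ℕ}

lemma stable_char {M : Market n m} {μ : Fin n → Option (Fin m)} (hs : M.Stable μ) (b : Fin n) :
    (μ b = none ∨ ∃ c, μ b = some c ∧
        (univ.filter fun j => μ j = some c ∧ j < b).card < M.q c) ∧
      ∀ o, (o = none ∨ ∃ c, o = some c ∧
          (univ.filter fun j => μ j = some c ∧ j < b).card < M.q c) →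
        M.rank b (μ b) ≤ M.rank b o := by
  obtain ⟨hmatch, hIR, hblock⟩ := hs
  constructor
  · cases hb : μ b with
    | none => exact Or.inl rfl
    | some c =>
      refine Or.inr ⟨c, rfl, ?_⟩
      have hss : (univ.filter fun j => μ j = some c ∧ j < b)
          ⊂ (univ.filter fun j => μ j = some c) := by
        constructor
        · intro x hx
          rcases Finset.mem_filter.1 hx with ⟨hu, h1, -⟩
          exact Finset.mem_filter.2 ⟨hu, h1⟩
        · intro hsub
          have hbmem : b ∈ (univ.filter fun j => μ j = some c) :=
            Finset.mem_filter.2 ⟨Finset.mem_univ b, hb⟩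
          have := (Finset.mem_filter.1 (hsub hbmem)).2.2
          exact absurd this (lt_irrefl b)
      exact lt_of_lt_of_le (Finset.card_lt_card hss) (hmatch c)
  · intro o ho
    by_contra hlt
    push_neg at hlt
    rcases ho with rfl | ⟨c, rfl, hcnt⟩
    · cases hb : μ b with
      | none => rw [hb] at hlt; exact lt_irrefl _ hlt
      | some c =>
        have h1 : M.rank b (some c) < M.rank b none := hIR b c hb
        rw [hb] at hlt
        exact lt_asymm hlt h1
    · apply hblock b c
      refine ⟨hlt, ?_⟩
      by_cases hfree : (univ.filter fun j => μ j = some c).card < M.q c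
      · exact Or.inl hfree
      · have hsub : (univ.filter fun j => μ j = some c ∧ j < b)
            ⊆ (univ.filter fun j => μ j = some c) := by
          intro x hx
          rcases Finset.mem_filter.1 hx with ⟨hu, h1, -⟩
          exact Finset.mem_filter.2 ⟨hu, h1⟩
        have hcc : (univ.filter fun j => μ j = some c ∧ j < b).card
            < (univ.filter fun j => μ j = some c).card :=
          lt_of_lt_of_le hcnt (not_lt.1 hfree)
        have hss : (univ.filter fun j => μ j = some c ∧ j < b)
            ⊂ (univ.filter fun j => μ j = some c) :=
          (Finset.ssubset_iff_subset_ne).2 ⟨hsub, fun heq => by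
            rw [heq] at hcc; exact lt_irrefl _ hcc⟩
        obtain ⟨j, hj, hjn⟩ := Finset.exists_of_ssubset hss
        have hjc : μ j = some c := (Finset.mem_filter.1 hj).2
        have hjb : ¬ j < b := by
          intro hlt'
          exact hjn (Finset.mem_filter.2 ⟨Finset.mem_univ j, hjc, hlt'⟩)
        have hne : j ≠ b := by
          intro h
          subst h
          rw [hjc] at hlt
          exact lt_irrefl _ hlt
        exact Or.inr ⟨j, hjc, lt_of_le_of_ne (not_lt.1 hjb) (Ne.symm hne)⟩

end Market

lemma ksmall {m : ℕ} (κ : Fin m → ℕ) (hmono : Monotone κ) (S : Finset (Fin m)) :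
    (∑ l : Fin m, if (l : ℕ) < S.card then κ l else 0) ≤ ∑ l ∈ S, κ l := by
  classical
  have hkm : S.card ≤ m := by
    have := Finset.card_le_univ S
    simpa using this
  set k := S.card with hk
  have e := S.orderIsoOfFin (k := k) rfl
  have key : ∀ (a : ℕ) (h : a < k), a ≤ ((e ⟨a, h⟩ : Fin m) : ℕ) := by
    intro a
    induction a with
    | zero => intro h; exact Nat.zero_le _
    | succ a IH =>
      intro h
      have ha : a < k := lt_trans (Nat.lt_succ_self a) h
      have h1 := IH ha
      have h2 : ((e ⟨a, ha⟩ : Fin m) : ℕ) < ((e ⟨a + 1, h⟩ : Fin m) : ℕ) := by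
        have hlt : (⟨a, ha⟩ : Fin k) < ⟨a + 1, h⟩ := by
          simp [Fin.lt_def]
        have := e.lt_iff_lt.2 hlt
        exact this
      omega
  have hL : (∑ l : Fin m, if (l : ℕ) < k then κ l else 0)
      = ∑ x : Fin k, κ (Fin.castLE hkm x) := by
    rw [← Finset.sum_filter]
    apply Finset.sum_bij (i := fun (l : Fin m) (hl : l ∈ (univ : Finset (Fin m)).filter
        (fun l' : Fin m => (l' : ℕ) < k)) => (⟨(l : ℕ), (Finset.mem_filter.1 hl).2⟩ : Fin k))
    · intro a ha; exact Finset.mem_univ _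
    · intro a ha b hb hab
      exact Fin.ext (by simpa [Fin.mk.injEq] using hab)
    · intro b _
      exact ⟨Fin.castLE hkm b, Finset.mem_filter.2 ⟨Finset.mem_univ _, b.isLt⟩, rfl⟩
    · intro a ha
      rfl
  have hR : ∑ l ∈ S, κ l = ∑ x : Fin k, κ (e x) := by
    rw [← Finset.sum_coe_sort S κ]
    exact (Equiv.sum_comp e.toEquiv (fun y : S => κ y)).symm
  rw [hL, hR]
  apply Finset.sum_le_sum
  intro x _
  apply hmono
  have hx : ((Fin.castLE hkm x) : ℕ) ≤ ((e x : Fin m) : ℕ) := by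
    have := key x.1 x.2
    simpa using this
  exact hx

/-- let `κ` list the capacities in increasing order and
`Σ(T) = κ 0 + ⋯ + κ (T-1)`.  Any student whose priority rank (position `i + 1`)
is at most `Σ(T)` is rejected at most `T - 1` times during the straightforward
application process, and her TCDM outcome with round limit `T` equals her DA
outcome (the unique stable matching). -/
theorem unconstrained_students_get_DA_outcome (n m : ℕ) (M : Market n m)
    (κ : Fin m → ℕ) (σ : Equiv.Perm (Fin m)) (hmono : Monotone κ)
    (hκ : ∀ c, κ c = M.q (σ c))
    (T : ℕ) (hT : 1 ≤ T) (i : Fin n)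
    (hi : (i : ℕ) + 1 ≤ ∑ k : Fin m, if (k : ℕ) < T then κ k else 0)
    (app : ℕ → Fin n → Option (Fin m)) (hrun : M.IsRun app)
    (μDA : Fin n → Option (Fin m)) (hDA : M.Stable μDA) :
    (∀ t : ℕ,
        ((Finset.range t).filter fun s => M.tentative (app s) i ≠ app s i).card
          ≤ T - 1) ∧
      M.tentative (app (T - 1)) i = μDA i := by
  classical
  -- No student of rank ≤ i is ever rejected at a round ≥ T - 1.
  have noReject : ∀ s : ℕ, T - 1 ≤ s → ∀ b : Fin n, (b : ℕ) ≤ (i : ℕ) →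
      M.tentative (app s) b = app s b := by
    intro s hs b hb
    by_contra hrej
    obtain ⟨S, hcard, hfull⟩ := Market.claimC hrun s b hrej
    have hsum : ∑ c ∈ S, M.q c ≤ (b : ℕ) := Market.sumbound (app s) b S hfull
    have hq : ∀ c, M.q c = κ (σ.symm c) := fun c => by
      rw [hκ (σ.symm c), Equiv.apply_symm_apply]
    have h1 : ∑ l ∈ S.image σ.symm, κ l = ∑ c ∈ S, M.q c := by
      rw [Finset.sum_image (by intro x _ y _ h; exact σ.symm.injective h)]
      exact Finset.sum_congr rfl fun c _ => (hq c).symm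
    have hcard2 : (S.image σ.symm).card = S.card :=
      Finset.card_image_of_injective S σ.symm.injective
    have h2 := ksmall κ hmono (S.image σ.symm)
    have hTcard : T ≤ (S.image σ.symm).card := by rw [hcard2, hcard]; omega
    have h3 : (∑ l : Fin m, if (l : ℕ) < T then κ l else 0)
        ≤ ∑ l : Fin m, if (l : ℕ) < (S.image σ.symm).card then κ l else 0 := by
      apply Finset.sum_le_sum
      intro l _
      by_cases hl : (l : ℕ) < T
      · rw [if_pos hl, if_pos (lt_of_lt_of_le hl hTcard)]
      · rw [if_neg hl]; exact Nat.zero_le _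
    have : (i : ℕ) + 1 ≤ (b : ℕ) :=
      le_trans hi (le_trans h3 (le_trans h2 (le_trans h1.le hsum)))
    omega
  constructor
  · -- Part 1: at most T - 1 rejections
    intro t
    by_contra hgt
    push_neg at hgt
    have hTle : T ≤ ((Finset.range t).filter
        fun s => M.tentative (app s) i ≠ app s i).card := by omega
    have hex : ∃ s ∈ (Finset.range t).filter
        (fun s => M.tentative (app s) i ≠ app s i), T - 1 ≤ s := by
      by_contra hns
      push_neg at hns
      have hsub : (Finset.range t).filter (fun s => M.tentative (app s) i ≠ app s i)
          ⊆ Finset.range (T - 1) := by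
        intro s hsmem
        exact Finset.mem_range.2 (hns s hsmem)
      have := Finset.card_le_card hsub
      rw [Finset.card_range] at this
      omega
    obtain ⟨s, hsmem, hsge⟩ := hex
    exact (Finset.mem_filter.1 hsmem).2 (noReject s hsge i le_rfl)
  · -- Part 2: TCDM outcome equals the stable (DA) outcome
    set t0 := T - 1 with ht0
    have main : ∀ N : ℕ, ∀ b : Fin n, (b : ℕ) = N → (b : ℕ) ≤ (i : ℕ) →
        M.tentative (app t0) b = μDA b := by
      intro N
      induction N using Nat.strong_induction_on with
      | _ N IH =>
        intro b hbN hbi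
        have hlow : ∀ j : Fin n, j < b → M.tentative (app t0) j = μDA j := by
          intro j hj
          have hjN : (j : ℕ) < N := by rw [← hbN]; exact hj
          exact IH (j : ℕ) hjN j rfl (le_trans (le_of_lt hjN) (hbN ▸ hbi))
        have hcnt : ∀ c : Fin m,
            (univ.filter fun j => M.tentative (app t0) j = some c ∧ j < b).card
              = (univ.filter fun j => μDA j = some c ∧ j < b).card := by
          intro c
          congr 1
          apply Finset.filter_congr
          intro x _
          by_cases hx : x < b
          · simp [hlow x hx]
          · simp [hx]
        have hnorej : M.tentative (app t0) b = app t0 b := noReject t0 le_rfl b hbi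
        have hchar := Market.stable_char hDA b
        have hmin : ∀ o, (o = none ∨ ∃ c, o = some c ∧
            (univ.filter fun j => M.tentative (app t0) j = some c ∧ j < b).card < M.q c) →
            M.rank b (M.tentative (app t0) b) ≤ M.rank b o := by
          intro o ho
          rw [hnorej]
          apply Market.invariant hrun t0 b o
          intro c hc
          rcases ho with rfl | ⟨c', hc', hlt⟩
          · exact absurd hc.symm (Option.some_ne_none _)
          · rw [hc] at hc'
            have : c = c' := Option.some_inj.1 hc'
            subst this
            exact fun hfull => absurd hfull (not_le.2 hlt)
        have havail : (M.tentative (app t0) b = none ∨ ∃ c, M.tentative (app t0) b = some c ∧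
            (univ.filter fun j => M.tentative (app t0) j = some c ∧ j < b).card < M.q c) := by
          cases hb : M.tentative (app t0) b with
          | none => exact Or.inl rfl
          | some c =>
            refine Or.inr ⟨c, rfl, ?_⟩
            have h1 := ((M.tent_iff (app t0) b c).1 hb).2
            refine lt_of_le_of_lt (Finset.card_le_card ?_) h1
            intro x hx
            rcases Finset.mem_filter.1 hx with ⟨hu, hx1, hx2⟩
            exact Finset.mem_filter.2 ⟨hu, ((M.tent_iff (app t0) x c).1 hx1).1, hx2⟩
        have hle1 : M.rank b (M.tentative (app t0) b) ≤ M.rank b (μDA b) := by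
          apply hmin
          rcases hchar.1 with hnone | ⟨c, hc, hlt⟩
          · exact Or.inl hnone
          · exact Or.inr ⟨c, hc, by rw [hcnt c]; exact hlt⟩
        have hle2 : M.rank b (μDA b) ≤ M.rank b (M.tentative (app t0) b) := by
          apply hchar.2
          rcases havail with hnone | ⟨c, hc, hlt⟩
          · exact Or.inl hnone
          · exact Or.inr ⟨c, hc, by rw [← hcnt c]; exact hlt⟩
        exact M.rank_inj b (le_antisymm hle1 hle2)
    exact main (i : ℕ) i rfl le_rfl
end
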